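/- The COTS-distance function d on a path-connected finite topological space, defined as one less than the cardinality of a shortest COTS-arc connecting two points, is a metric: d(x,x)=0, d(x,y)=d(y,x), and d(x,z) ≤ d(x,y) + d(y,z). -/

import Mathlib

open Set

/-- The minimal open neighborhood of a point in a topological space. -/
def minOpenNhd {X : Type*} (t : TopologicalSpace X) (x : X) : Set X :=
  ⋂₀ {U : Set X | t.IsOpen U ∧ x ∈ U}

/-- The specialization-style preorder: `x ≤ y` iff `U_x ⊆ U_y`. -/
def specLE {X : Type*} (t : TopologicalSpace X) (x y : X) : Prop :=
  minOpenNhd t x ⊆ minOpenNhd t y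

/-- Two points are adjacent if distinct and comparable in the specialization order. -/
def Adjacent {X : Type*} (t : TopologicalSpace X) (x y : X) : Prop :=
  x ≠ y ∧ (specLE t x y ∨ specLE t y x)

/-- The adjacency set of a point. -/
def adjSet {X : Type*} (t : TopologicalSpace X) (x : X) : Set X := {y | Adjacent t x y}

/-- A COTS: a connected space in which every 3-point subset has a point separating
the other two. -/
def IsCOTS {X : Type*} (t : TopologicalSpace X) : Prop :=
  @ConnectedSpace X t ∧
    ∀ Y : Set X, Y.ncard = 3 →
      ∃ y ∈ Y, ∃ a ∈ Y \ {y}, ∃ b ∈ Y \ {y},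
        @connectedComponentIn X t {y}ᶜ a ≠ @connectedComponentIn X t {y}ᶜ b

/-- An endpoint of a COTS: a point with at most one neighbor. -/
def IsEndpoint {X : Type*} (t : TopologicalSpace X) (x : X) : Prop :=
  (adjSet t x).ncard ≤ 1

/-- A COTS-path: the continuous image of a finite COTS. -/
def IsCOTSPath {Y : Type*} (tY : TopologicalSpace Y) (P : Set Y) : Prop :=
  ∃ (C : Type) (tC : TopologicalSpace C), Finite C ∧ IsCOTS tC ∧
    ∃ f : C → Y, @Continuous C Y tC tY f ∧ Set.range f = P

/-- A COTS-path with prescribed start and end points. -/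
def IsCOTSPathFromTo {Y : Type*} (tY : TopologicalSpace Y) (P : Set Y) (a b : Y) : Prop :=
  ∃ (C : Type) (tC : TopologicalSpace C), Finite C ∧ IsCOTS tC ∧
    ∃ f : C → Y, @Continuous C Y tC tY f ∧ Set.range f = P ∧
      ∃ c₀ c₁ : C, IsEndpoint tC c₀ ∧ IsEndpoint tC c₁ ∧ f c₀ = a ∧ f c₁ = b

/-- A COTS-arc: the homeomorphic image of a finite COTS. -/
def IsCOTSArc {Y : Type*} (tY : TopologicalSpace Y) (A : Set Y) : Prop :=
  ∃ (C : Type) (tC : TopologicalSpace C), Finite C ∧ IsCOTS tC ∧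
    ∃ f : C → Y, @Topology.IsEmbedding C Y tC tY f ∧ Set.range f = A

/-- A COTS-arc with prescribed endpoints. -/
def IsCOTSArcFromTo {Y : Type*} (tY : TopologicalSpace Y) (A : Set Y) (a b : Y) : Prop :=
  ∃ (C : Type) (tC : TopologicalSpace C), Finite C ∧ IsCOTS tC ∧
    ∃ f : C → Y, @Topology.IsEmbedding C Y tC tY f ∧ Set.range f = A ∧
      ∃ c₀ c₁ : C, IsEndpoint tC c₀ ∧ IsEndpoint tC c₁ ∧ f c₀ = a ∧ f c₁ = b

/-- The COTS-distance: one less than the minimal cardinality of a COTS-arc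
joining two points (`⊤` if there is no such arc). -/
noncomputable def cotsDist {X : Type*} (t : TopologicalSpace X) (x y : X) : ℕ∞ :=
  sInf {n : ℕ∞ | ∃ A : Set X, IsCOTSArcFromTo t A x y ∧ (A.ncard : ℕ∞) = n + 1}

/-- The Khalimsky topology on ℤ. -/
def khal : TopologicalSpace ℤ :=
  TopologicalSpace.generateFrom
    {s : Set ℤ | ∃ n : ℤ, (Odd n ∧ s = {n}) ∨ (Even n ∧ s = {n - 1, n, n + 1})}

/-- The Khalimsky plane topology on ℤ × ℤ. -/
def khalPlane : TopologicalSpace (ℤ × ℤ) := @instTopologicalSpaceProd ℤ ℤ khal khal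

/-- A point of the Khalimsky plane is pure if its coordinates have the same parity. -/
def IsPurePt (p : ℤ × ℤ) : Prop := (Even p.1 ∧ Even p.2) ∨ (Odd p.1 ∧ Odd p.2)

/-- A digital Jordan curve: a finite set of at least 4 points such that removing
any point leaves a COTS-arc. -/
def IsJordanCurve {X : Type*} (t : TopologicalSpace X) (J : Set X) : Prop :=
  J.Finite ∧ 4 ≤ J.ncard ∧ ∀ j ∈ J, IsCOTSArc t (J \ {j})

/-- The interior of a digital Jordan curve in the Khalimsky plane: the union of the
finite (bounded) connected components of its complement. -/
def jInterior (J : Set (ℤ × ℤ)) : Set (ℤ × ℤ) :=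
  ⋃₀ {S | ∃ p ∉ J, S = @connectedComponentIn _ khalPlane Jᶜ p ∧ S.Finite}

section Dev

variable {X : Type*} [t : TopologicalSpace X]

lemma mem_minOpenNhd_iff' {x y : X} :
    y ∈ minOpenNhd t x ↔ ∀ U : Set X, IsOpen U → x ∈ U → y ∈ U := by
  simp only [minOpenNhd, Set.mem_sInter, Set.mem_setOf_eq, and_imp]
  tauto

lemma mem_minOpenNhd_self (x : X) : x ∈ minOpenNhd t x :=
  mem_minOpenNhd_iff'.2 fun _ _ hx => hx

lemma isOpen_minOpenNhd [Finite X] (x : X) : IsOpen (minOpenNhd t x) :=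
  Set.Finite.isOpen_sInter (Set.toFinite _) fun _ h => h.1

lemma specLE_iff_mem [Finite X] {x y : X} : specLE t y x ↔ y ∈ minOpenNhd t x := by
  constructor
  · intro h; exact h (mem_minOpenNhd_self y)
  · intro h
    exact Set.sInter_subset_of_mem ⟨isOpen_minOpenNhd x, h⟩

lemma isOpen_iff_minOpenNhd [Finite X] {S : Set X} :
    IsOpen S ↔ ∀ x ∈ S, minOpenNhd t x ⊆ S := by
  constructor
  · intro hS x hx
    exact Set.sInter_subset_of_mem ⟨hS, hx⟩
  · intro h
    have : S = ⋃ x ∈ S, minOpenNhd t x := by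
      apply Set.Subset.antisymm
      · intro x hx
        exact Set.mem_biUnion hx (mem_minOpenNhd_self x)
      · intro x hx
        simp only [Set.mem_iUnion] at hx
        obtain ⟨y, hy, hxy⟩ := hx
        exact h y hy hxy
    rw [this]
    exact isOpen_biUnion fun x _ => isOpen_minOpenNhd x

lemma minOpenNhd_induced {Z : Type*} (f : Z → X) (z : Z) :
    minOpenNhd (t.induced f) z = f ⁻¹' minOpenNhd t (f z) := by
  letI tZ : TopologicalSpace Z := t.induced f
  ext w
  constructor
  · intro h
    refine mem_minOpenNhd_iff'.2 fun V hV hfz => ?_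
    exact mem_minOpenNhd_iff'.1 h (f ⁻¹' V) (isOpen_induced_iff.2 ⟨V, hV, rfl⟩) hfz
  · intro h
    refine mem_minOpenNhd_iff'.2 fun U hU hz => ?_
    obtain ⟨V, hV, rfl⟩ := isOpen_induced_iff.1 hU
    exact mem_minOpenNhd_iff'.1 h V hV hz

lemma specLE_induced {Z : Type*} [Finite X] [Finite Z] (f : Z → X) (a b : Z) :
    specLE (t.induced f) a b ↔ specLE t (f a) (f b) := by
  letI tZ : TopologicalSpace Z := t.induced f
  have h1 : specLE tZ a b ↔ a ∈ minOpenNhd tZ b := specLE_iff_mem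
  have h2 : specLE t (f a) (f b) ↔ f a ∈ minOpenNhd t (f b) := specLE_iff_mem
  rw [h1, h2]
  show a ∈ minOpenNhd (t.induced f) b ↔ _
  rw [minOpenNhd_induced f b, Set.mem_preimage]

/-- Comparability in the specialization order. -/
def Cmp (t : TopologicalSpace X) (a b : X) : Prop := specLE t a b ∨ specLE t b a

lemma Cmp.symm {a b : X} (h : Cmp t a b) : Cmp t b a := h.elim Or.inr Or.inl

lemma cmp_induced {Z : Type*} [Finite X] [Finite Z] (f : Z → X) (a b : Z) :
    Cmp (t.induced f) a b ↔ Cmp t (f a) (f b) := by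
  unfold Cmp
  rw [specLE_induced f a b, specLE_induced f b a]

lemma Cmp.isPreconnected_pair [Finite X] {a b : X} (h : Cmp t a b) :
    IsPreconnected ({a, b} : Set X) := by
  have key : ∀ u v : X, specLE t u v → IsPreconnected ({u, v} : Set X) := by
    intro u v huv
    have hu : u ∈ minOpenNhd t v := specLE_iff_mem.1 huv
    have hvc : v ∈ closure ({u} : Set X) := by
      rw [mem_closure_iff]
      intro o ho hvo
      exact ⟨u, mem_minOpenNhd_iff'.1 hu o ho hvo, rfl⟩
    refine IsPreconnected.subset_closure (s := ({u} : Set X))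
      isPreconnected_singleton (by simp) ?_
    intro w hw
    rcases hw with rfl | hw
    · exact subset_closure rfl
    · simp only [Set.mem_singleton_iff] at hw; subst hw; exact hvc
  rcases h with h | h
  · exact key a b h
  · rw [Set.pair_comm]; exact key b a h

lemma isConnected_setOf_mem_list [Finite X] :
    ∀ l : List X, l ≠ [] → l.Chain' (fun a b => Cmp t a b) →
      IsConnected {x | x ∈ l}
  | [], h, _ => absurd rfl h
  | [a], _, _ => by
      have : {x | x ∈ [a]} = ({a} : Set X) := by ext x; simp
      rw [this]; exact isConnected_singleton
  | a :: b :: r, _, hc => by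
      simp only [List.Chain', List.isChain_cons_cons] at hc
      have IH := isConnected_setOf_mem_list (b :: r) (by simp) hc.2
      have hset : {x | x ∈ a :: b :: r} = ({a, b} : Set X) ∪ {x | x ∈ b :: r} := by
        ext x; simp [or_assoc]
      rw [hset]
      refine IsConnected.union ⟨b, ?_, ?_⟩ ⟨⟨a, by simp⟩, hc.1.isPreconnected_pair⟩ IH
      · simp
      · simp

lemma exists_walk_of_connected [Finite X] [PreconnectedSpace X] (a b : X) :
    ∃ l : List X, l.Chain' (Adjacent t) ∧ l.head? = some a ∧ l.getLast? = some b := by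
  set W : Set X := {c | ∃ l : List X, l.Chain' (Adjacent t) ∧ l.head? = some a ∧
    l.getLast? = some c} with hW
  have hext : ∀ c v : X, c ∈ W → Cmp t c v → v ∈ W := by
    intro c v hc hcv
    by_cases hcvne : c = v
    · exact hcvne ▸ hc
    obtain ⟨l, hch, hh, hl⟩ := hc
    refine ⟨l ++ [v], ?_, ?_, ?_⟩
    · refine List.isChain_append.2 ⟨hch, List.isChain_singleton v, ?_⟩
      intro p hp q hq
      rw [hl] at hp
      simp only [Option.mem_def, Option.some.injEq] at hp
      simp only [List.head?_cons, Option.mem_def, Option.some.injEq] at hq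
      subst hp; subst hq
      exact ⟨hcvne, hcv⟩
    · have hlne : l ≠ [] := by
        intro h; rw [h] at hh; simp at hh
      cases l with
      | nil => exact absurd rfl hlne
      | cons x xs => simpa using hh
    · exact List.getLast?_concat
  have haW : a ∈ W := ⟨[a], List.isChain_singleton a, rfl, rfl⟩
  have hopen : IsOpen W := by
    rw [isOpen_iff_minOpenNhd]
    intro c hc v hv
    exact hext c v hc (Or.inl (specLE_iff_mem.2 hv)).symm
  have hclosed : IsClosed W := by
    rw [← isOpen_compl_iff, isOpen_iff_minOpenNhd]
    intro c hc v hv hvW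
    exact hc (hext v c hvW (Or.inl (specLE_iff_mem.2 hv)))
  have : W = Set.univ := IsClopen.eq_univ ⟨hclosed, hopen⟩ ⟨a, haW⟩
  have hb : b ∈ W := this ▸ Set.mem_univ b
  exact hb

/-- No comparabilities at distance `≥ 2` along the list. -/
def SepL (t : TopologicalSpace X) (l : List X) : Prop :=
  ∀ i j (hi : i < l.length) (hj : j < l.length), i + 2 ≤ j →
    ¬ Cmp t (l.get ⟨i, hi⟩) (l.get ⟨j, hj⟩)

lemma getLast?_take_succ {l : List X} {k : ℕ} (hk : k < l.length) :
    (l.take (k + 1)).getLast? = some (l.get ⟨k, hk⟩) := by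
  rw [List.getLast?_eq_getElem?]
  have hlen : (l.take (k + 1)).length = k + 1 := by
    rw [List.length_take]; omega
  rw [hlen]
  simp [List.getElem?_take, List.getElem?_eq_getElem hk]

lemma getLast?_drop_eq {l : List X} {j : ℕ} (hj : j < l.length) :
    (l.drop j).getLast? = l.getLast? := by
  rw [List.getLast?_eq_getElem?, List.getLast?_eq_getElem?, List.length_drop,
    List.getElem?_drop]
  congr 1
  omega

lemma head?_append_left {l₁ l₂ : List X} (h : l₁ ≠ []) :
    (l₁ ++ l₂).head? = l₁.head? := by
  cases l₁ with
  | nil => exact absurd rfl h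
  | cons x xs => simp

lemma getLast?_append_right {l₁ l₂ : List X} (h : l₂ ≠ []) :
    (l₁ ++ l₂).getLast? = l₂.getLast? := by
  rw [List.getLast?_append]
  cases l₂ with
  | nil => exact absurd rfl h
  | cons x xs =>
    have : (x :: xs).getLast? = some ((x :: xs).getLast (by simp)) :=
      List.getLast?_eq_getLast _
    rw [this]
    simp [Option.or]

lemma head?_take {l : List X} {k : ℕ} (hk : 0 < k) :
    (l.take k).head? = l.head? := by
  rw [List.head?_eq_getElem?, List.head?_eq_getElem?, List.getElem?_take]
  simp [hk]

lemma walk_minimize [Finite X] :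
    ∀ n (l : List X), l.length ≤ n → l.Chain' (Adjacent t) →
    ∃ l' : List X, l'.Chain' (Adjacent t) ∧ l'.head? = l.head? ∧
      l'.getLast? = l.getLast? ∧ l'.length ≤ l.length ∧ l'.Nodup ∧ SepL t l' := by
  intro n
  induction n with
  | zero =>
    intro l hl _
    have : l = [] := List.eq_nil_of_length_eq_zero (by omega)
    subst this
    exact ⟨[], List.IsChain.nil, rfl, rfl, le_refl _, by simp, fun i j hi _ _ => by simp at hi⟩
  | succ n IH =>
    intro l hl hch
    by_cases hbad : ∃ i, ∃ j, ∃ (hi : i < l.length), ∃ (hj : j < l.length), i + 2 ≤ j ∧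
        (l.get ⟨i, hi⟩ = l.get ⟨j, hj⟩ ∨ Cmp t (l.get ⟨i, hi⟩) (l.get ⟨j, hj⟩))
    · obtain ⟨i, j, hi, hj, hij, hc⟩ := hbad
      -- construct a strictly shorter walk with the same endpoints
      have hstep : ∃ l'' : List X, l''.Chain' (Adjacent t) ∧ l''.head? = l.head? ∧
          l''.getLast? = l.getLast? ∧ l''.length < l.length := by
        have hdropne : l.drop j ≠ [] := by
          intro h
          have := congrArg List.length h
          rw [List.length_drop] at this
          simp only [List.length_nil] at this
          omega
        by_cases heq : l.get ⟨i, hi⟩ = l.get ⟨j, hj⟩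
        · rcases Nat.eq_zero_or_pos i with hi0 | hipos
          · subst hi0
            refine ⟨l.drop j, hch.drop j, ?_, getLast?_drop_eq hj, ?_⟩
            · rw [List.head?_drop, List.head?_eq_getElem?,
                List.getElem?_eq_getElem hj, List.getElem?_eq_getElem hi]
              simp only [List.get_eq_getElem] at heq
              rw [heq]
            · rw [List.length_drop]; omega
          · obtain ⟨i', rfl⟩ : ∃ i', i = i' + 1 := ⟨i - 1, by omega⟩
            have htake : (l.take (i' + 1)).getLast? = some (l.get ⟨i', by omega⟩) :=
              getLast?_take_succ (by omega)
            have htakene : l.take (i' + 1) ≠ [] := by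
              intro h
              have := congrArg List.length h
              rw [List.length_take, Nat.min_eq_left (by omega : i' + 1 ≤ l.length)] at this
              simp at this
            refine ⟨l.take (i' + 1) ++ l.drop j, ?_, ?_, ?_, ?_⟩
            · refine List.isChain_append.2 ⟨hch.take _, hch.drop j, ?_⟩
              intro p hp q hq
              rw [htake] at hp
              rw [List.head?_drop, List.getElem?_eq_getElem hj] at hq
              simp only [Option.mem_def, Option.some.injEq] at hp hq
              subst hp; subst hq
              have hadj := List.isChain_iff_getElem.1 hch i' (by omega)
              have hje : l[j] = l.get ⟨i' + 1, hi⟩ := by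
                simp only [List.get_eq_getElem] at heq ⊢
                exact heq.symm
              rw [hje]
              exact hadj
            · rw [head?_append_left htakene, head?_take (by omega)]
            · rw [getLast?_append_right hdropne, getLast?_drop_eq hj]
            · rw [List.length_append, List.length_take, List.length_drop,
                Nat.min_eq_left (by omega : i' + 1 ≤ l.length)]
              omega
        · have hadj : Adjacent t (l.get ⟨i, hi⟩) (l.get ⟨j, hj⟩) := by
            rcases hc with hc | hc
            · exact absurd hc heq
            · exact ⟨heq, hc⟩
          have htakene : l.take (i + 1) ≠ [] := by
            intro h
            have := congrArg List.length h
            rw [List.length_take, Nat.min_eq_left (by omega : i + 1 ≤ l.length)] at this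
            simp at this
          refine ⟨l.take (i + 1) ++ l.drop j, ?_, ?_, ?_, ?_⟩
          · refine List.isChain_append.2 ⟨hch.take _, hch.drop j, ?_⟩
            intro p hp q hq
            rw [getLast?_take_succ hi] at hp
            rw [List.head?_drop, List.getElem?_eq_getElem hj] at hq
            simp only [Option.mem_def, Option.some.injEq] at hp hq
            subst hp; subst hq
            have hje : (l[j] : X) = l.get ⟨j, hj⟩ := by
              simp [List.get_eq_getElem]
            rw [hje]
            exact hadj
          · rw [head?_append_left htakene, head?_take (by omega)]
          · rw [getLast?_append_right hdropne, getLast?_drop_eq hj]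
          · rw [List.length_append, List.length_take, List.length_drop,
              Nat.min_eq_left (by omega : i + 1 ≤ l.length)]
            omega
      obtain ⟨l'', hch'', hh'', hl'', hlen''⟩ := hstep
      obtain ⟨l', h1, h2, h3, h4, h5, h6⟩ := IH l'' (by omega) hch''
      exact ⟨l', h1, h2.trans hh'', h3.trans hl'', by omega, h5, h6⟩
    · push_neg at hbad
      refine ⟨l, hch, rfl, rfl, le_refl _, ?_, ?_⟩
      · rw [List.nodup_iff_injective_get]
        intro ⟨i, hi⟩ ⟨j, hj⟩ hij
        by_contra hne
        have hne' : i ≠ j := fun h => hne (by simp [h])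
        rcases Nat.lt_or_ge i j with h | h
        · rcases Nat.lt_or_ge j (i + 2) with h2 | h2
          · have hji : j = i + 1 := by omega
            subst hji
            have := List.isChain_iff_getElem.1 hch i (by omega)
            exact this.1 hij
          · exact (hbad i j hi hj h2).1 hij
        · rcases Nat.lt_or_ge i (j + 2) with h2 | h2
          · have hji : i = j + 1 := by omega
            subst hji
            have := List.isChain_iff_getElem.1 hch j (by omega)
            exact this.1 hij.symm
          · exact (hbad j i hj hi h2).1 hij.symm
      · intro i j hi hj hij
        exact (hbad i j hi hj hij).2

lemma fence_arc [Finite X] (l : List X) (hne : l ≠ []) (hch : l.Chain' (Adjacent t))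
    (hnd : l.Nodup) (hsep : SepL t l) {x z : X} (hx : l.head? = some x)
    (hz : l.getLast? = some z) :
    ∃ A : Set X, IsCOTSArcFromTo t A x z ∧ A.ncard = l.length := by
  classical
  set n := l.length with hn
  have npos : 0 < n := List.length_pos_iff.2 hne
  letI tC : TopologicalSpace (Fin n) := t.induced l.get
  have einj : Function.Injective l.get := List.nodup_iff_injective_get.1 hnd
  have hcmp : ∀ a b : Fin n, Cmp tC a b ↔ Cmp t (l.get a) (l.get b) := fun a b =>
    cmp_induced l.get a b
  have hnear : ∀ a b : Fin n, Cmp t (l.get a) (l.get b) →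
      (a : ℕ) ≤ (b : ℕ) + 1 ∧ (b : ℕ) ≤ (a : ℕ) + 1 := by
    intro a b hab
    constructor
    · by_contra hcon
      push_neg at hcon
      exact hsep (b : ℕ) (a : ℕ) b.2 a.2 (by omega) hab.symm
    · by_contra hcon
      push_neg at hcon
      exact hsep (a : ℕ) (b : ℕ) a.2 b.2 (by omega) hab
  have hemb : @Topology.IsEmbedding (Fin n) X tC t l.get := ⟨⟨rfl⟩, einj⟩
  have hrange : Set.range l.get = {x | x ∈ l} := by
    ext w
    exact ⟨fun ⟨i, hi⟩ => List.mem_iff_get.2 ⟨i, hi⟩, fun h => List.mem_iff_get.1 h⟩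
  have hncard : ({x | x ∈ l} : Set X).ncard = n := by
    have hA : ({x | x ∈ l} : Set X) = ↑l.toFinset := by ext w; simp
    rw [hA, Set.ncard_coe_finset, List.toFinset_card_of_nodup hnd]
  have hpc : @PreconnectedSpace (Fin n) tC := by
    refine ⟨?_⟩
    have h1 : IsPreconnected (l.get '' Set.univ) := by
      rw [Set.image_univ, hrange]
      exact (isConnected_setOf_mem_list l hne
        (List.IsChain.imp (fun a b h => h.2) hch)).2
    exact (Topology.IsInducing.isPreconnected_image hemb.toIsInducing).1 h1
  have hcs : @ConnectedSpace (Fin n) tC := @ConnectedSpace.mk _ tC hpc ⟨⟨0, npos⟩⟩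
  have core : ∀ i j k : Fin n, i < j → j < k →
      connectedComponentIn ({j}ᶜ : Set (Fin n)) i ≠ connectedComponentIn {j}ᶜ k := by
    intro i j k hij hjk heq
    have hkF : k ∈ ({j}ᶜ : Set (Fin n)) := Set.mem_compl_singleton_iff.2 (ne_of_gt hjk)
    have hiF : i ∈ ({j}ᶜ : Set (Fin n)) := Set.mem_compl_singleton_iff.2 (ne_of_lt hij)
    set F := ({j}ᶜ : Set (Fin n)) with hF
    set U : Set ↥F := {u | ((u : Fin n) : ℕ) < (j : ℕ)} with hU
    have hk : k ∈ connectedComponentIn F i := by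
      rw [heq]; exact mem_connectedComponentIn hkF
    rw [connectedComponentIn_eq_image hiF] at hk
    obtain ⟨w, hw, hwk⟩ := hk
    have hstep : ∀ u v : ↥F, v ∈ minOpenNhd (instTopologicalSpaceSubtype) u →
        ((v : Fin n) : ℕ) + 1 ≥ ((u : Fin n) : ℕ) ∧
          ((v : Fin n) : ℕ) ≤ ((u : Fin n) : ℕ) + 1 ∧ ((v : Fin n) : ℕ) ≠ (j : ℕ) := by
      intro u v hv
      have h1 : specLE (tC.induced (Subtype.val : ↥F → Fin n)) v u := specLE_iff_mem.2 hv
      have h2 : Cmp tC (↑v) (↑u) := (cmp_induced (Subtype.val : ↥F → Fin n) v u).1 (Or.inl h1)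
      have h3 : Cmp t (l.get ↑v) (l.get ↑u) := (hcmp _ _).1 h2
      have h4 := hnear _ _ h3
      have hvj : (↑v : Fin n) ≠ j := v.2
      exact ⟨by omega, by omega, fun hc => hvj (Fin.ext hc)⟩
    have hUopen : IsOpen U := by
      rw [isOpen_iff_minOpenNhd]
      intro u hu v hv
      have h := hstep u v hv
      simp only [hU, Set.mem_setOf_eq] at hu ⊢
      omega
    have hUclosed : IsClosed U := by
      rw [← isOpen_compl_iff, isOpen_iff_minOpenNhd]
      intro u hu v hv
      have h := hstep u v hv
      have huj : (↑u : Fin n) ≠ j := u.2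
      have huj' : ((u : Fin n) : ℕ) ≠ (j : ℕ) := fun hc => huj (Fin.ext hc)
      simp only [Set.mem_compl_iff, hU, Set.mem_setOf_eq] at hu ⊢
      omega
    have hiU : (⟨i, hiF⟩ : ↥F) ∈ U := by
      simp only [hU, Set.mem_setOf_eq]
      exact Fin.lt_def.1 hij
    have hsubset := IsClopen.connectedComponent_subset ⟨hUclosed, hUopen⟩ hiU
    have hwU : w ∈ U := hsubset hw
    have hwk' : w = ⟨k, hkF⟩ := Subtype.ext hwk
    rw [hwk'] at hwU
    simp only [hU, Set.mem_setOf_eq] at hwU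
    exact absurd (Fin.lt_def.1 hjk) (by omega)
  have hcots : IsCOTS tC := by
    refine ⟨hcs, ?_⟩
    intro Y hY
    obtain ⟨a, b, c, hab, hac, hbc, rfl⟩ := Set.ncard_eq_three.1 hY
    have key : ∀ p q r : Fin n, p < q → q < r → p ∈ ({a, b, c} : Set (Fin n)) →
        q ∈ ({a, b, c} : Set (Fin n)) → r ∈ ({a, b, c} : Set (Fin n)) →
        ∃ y ∈ ({a, b, c} : Set (Fin n)), ∃ p' ∈ ({a, b, c} : Set (Fin n)) \ {y},
          ∃ q' ∈ ({a, b, c} : Set (Fin n)) \ {y},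
            connectedComponentIn {y}ᶜ p' ≠ connectedComponentIn {y}ᶜ q' := by
      intro p q r hpq hqr hp hq hr
      exact ⟨q, hq, p, ⟨hp, by simp [ne_of_lt hpq]⟩, r, ⟨hr, by simp [ne_of_gt hqr]⟩,
        core p q r hpq hqr⟩
    have ha : a ∈ ({a, b, c} : Set (Fin n)) := by simp
    have hb : b ∈ ({a, b, c} : Set (Fin n)) := by simp
    have hc' : c ∈ ({a, b, c} : Set (Fin n)) := by simp
    rcases lt_trichotomy a b with h1 | h1 | h1
    · rcases lt_trichotomy b c with h2 | h2 | h2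
      · exact key a b c h1 h2 ha hb hc'
      · exact absurd h2 hbc
      · rcases lt_trichotomy a c with h3 | h3 | h3
        · exact key a c b h3 h2 ha hc' hb
        · exact absurd h3 hac
        · exact key c a b h3 h1 hc' ha hb
    · exact absurd h1 hab
    · rcases lt_trichotomy a c with h2 | h2 | h2
      · exact key b a c h1 h2 hb ha hc'
      · exact absurd h2 hac
      · rcases lt_trichotomy b c with h3 | h3 | h3
        · exact key b c a h3 h2 hb hc' ha
        · exact absurd h3 hbc
        · exact key c b a h3 h1 hc' hb ha
  have hgx : l.get ⟨0, npos⟩ = x := by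
    rw [List.head?_eq_getElem?, List.getElem?_eq_getElem npos] at hx
    simp only [Option.some.injEq] at hx
    simpa [List.get_eq_getElem] using hx
  have hlast : l.get ⟨n - 1, by omega⟩ = z := by
    rw [List.getLast?_eq_getElem?, List.getElem?_eq_getElem (by omega : n - 1 < l.length)] at hz
    simp only [Option.some.injEq] at hz
    simpa [List.get_eq_getElem] using hz
  have hend : ∀ m : Fin n, ((m : ℕ) = 0 ∨ (m : ℕ) = n - 1) → IsEndpoint tC m := by
    intro m hm
    have hsub : (adjSet tC m).Subsingleton := by
      intro u hu v hv
      simp only [adjSet, Set.mem_setOf_eq, Adjacent] at hu hv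
      have hu2 : Cmp t (l.get m) (l.get u) := (hcmp _ _).1 hu.2
      have hv2 : Cmp t (l.get m) (l.get v) := (hcmp _ _).1 hv.2
      have h1 := hnear _ _ hu2
      have h2 := hnear _ _ hv2
      have hmu : (m : ℕ) ≠ (u : ℕ) := fun h => hu.1 (Fin.ext h)
      have hmv : (m : ℕ) ≠ (v : ℕ) := fun h => hv.1 (Fin.ext h)
      have hun : (u : ℕ) < n := u.2
      have hvn : (v : ℕ) < n := v.2
      have hmn : (m : ℕ) < n := m.2
      exact Fin.ext (by omega)
    unfold IsEndpoint
    rcases hsub.eq_empty_or_singleton with h | ⟨w, h⟩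
    · rw [h]; simp
    · rw [h]; simp
  refine ⟨{x | x ∈ l}, ⟨Fin n, tC, inferInstance, hcots, l.get, hemb, by rw [hrange],
    ⟨0, npos⟩, ⟨n - 1, by omega⟩, hend _ (Or.inl rfl), hend _ (Or.inr rfl), hgx, hlast⟩,
    hncard⟩

lemma cotsDist_le_fence [Finite X] (l : List X) (hne : l ≠ [])
    (hch : l.Chain' (Adjacent t)) (hnd : l.Nodup) (hsep : SepL t l) {x z : X}
    (hx : l.head? = some x) (hz : l.getLast? = some z) :
    cotsDist t x z ≤ ((l.length - 1 : ℕ) : ℕ∞) := by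
  obtain ⟨A, harc, hcard⟩ := fence_arc l hne hch hnd hsep hx hz
  apply sInf_le
  refine ⟨A, harc, ?_⟩
  rw [hcard]
  have h1 : l.length - 1 + 1 = l.length := Nat.succ_pred_eq_of_pos (List.length_pos_iff.2 hne)
  rw [← h1]
  push_cast
  ring

lemma exists_walk_of_arc [Finite X] {A : Set X} {x z : X} (h : IsCOTSArcFromTo t A x z) :
    ∃ l : List X, l.Chain' (Adjacent t) ∧ l.head? = some x ∧ l.getLast? = some z ∧
      l.length ≤ A.ncard := by
  obtain ⟨C, tC, hfin, hcots, f, hemb, rfl, c₀, c₁, -, -, rfl, rfl⟩ := h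
  haveI := hfin
  letI := tC
  haveI : ConnectedSpace C := hcots.1
  obtain ⟨lc, hch, hh, hl⟩ := exists_walk_of_connected c₀ c₁
  obtain ⟨lc', h1, h2, h3, h4, h5, h6⟩ := walk_minimize lc.length lc (le_refl _) hch
  refine ⟨lc'.map f, ?_, ?_, ?_, ?_⟩
  · simp only [List.Chain', List.isChain_map]
    refine List.IsChain.imp ?_ h1
    intro a b hab
    refine ⟨fun hfe => hab.1 (hemb.injective hfe), ?_⟩
    have hcab : Cmp tC a b := hab.2
    rw [hemb.toIsInducing.eq_induced] at hcab
    exact (cmp_induced f a b).1 hcab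
  · rw [List.head?_map, h2, hh]; rfl
  · rw [List.getLast?_map, h3, hl]; rfl
  · rw [List.length_map]
    haveI := Fintype.ofFinite C
    calc lc'.length ≤ Fintype.card C := h5.length_le_card
    _ = Nat.card C := Nat.card_eq_fintype_card.symm
    _ = (Set.range f).ncard := by
        rw [← Nat.card_coe_set_eq, Nat.card_range_of_injective hemb.injective]

lemma cotsDist_self [Finite X] (x : X) : cotsDist t x x = 0 := by
  have h := cotsDist_le_fence [x] (by simp) (List.isChain_singleton x) (by simp)
    (fun i j hi hj hij => by simp at hi hj; omega) (x := x) (z := x) rfl rfl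
  simpa using h

lemma cotsDist_comm (x y : X) : cotsDist t x y = cotsDist t y x := by
  unfold cotsDist
  congr 1
  ext m
  constructor
  · rintro ⟨A, ⟨C, tC, hfin, hcots, f, hemb, hrng, c₀, c₁, he0, he1, h0, h1⟩, hc⟩
    exact ⟨A, ⟨C, tC, hfin, hcots, f, hemb, hrng, c₁, c₀, he1, he0, h1, h0⟩, hc⟩
  · rintro ⟨A, ⟨C, tC, hfin, hcots, f, hemb, hrng, c₀, c₁, he0, he1, h0, h1⟩, hc⟩
    exact ⟨A, ⟨C, tC, hfin, hcots, f, hemb, hrng, c₁, c₀, he1, he0, h1, h0⟩, hc⟩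

lemma cotsDist_triangle [Finite X] (x y z : X) :
    cotsDist t x z ≤ cotsDist t x y + cotsDist t y z := by
  by_cases h1 : cotsDist t x y = ⊤
  · rw [h1, top_add]; exact le_top
  by_cases h2 : cotsDist t y z = ⊤
  · rw [h2, add_top]; exact le_top
  obtain ⟨m1, hm1⟩ := WithTop.ne_top_iff_exists.1 h1
  obtain ⟨m2, hm2⟩ := WithTop.ne_top_iff_exists.1 h2
  -- extract arcs achieving the infimum
  have hS1 : {n : ℕ∞ | ∃ A : Set X, IsCOTSArcFromTo t A x y ∧ (A.ncard : ℕ∞) = n + 1}.Nonempty := by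
    by_contra hcon
    rw [Set.not_nonempty_iff_eq_empty] at hcon
    apply h1
    unfold cotsDist
    rw [hcon, sInf_empty]
  have hS2 : {n : ℕ∞ | ∃ A : Set X, IsCOTSArcFromTo t A y z ∧ (A.ncard : ℕ∞) = n + 1}.Nonempty := by
    by_contra hcon
    rw [Set.not_nonempty_iff_eq_empty] at hcon
    apply h2
    unfold cotsDist
    rw [hcon, sInf_empty]
  have hd1 : cotsDist t x y ∈ _ := csInf_mem hS1
  have hd2 : cotsDist t y z ∈ _ := csInf_mem hS2
  obtain ⟨A1, harc1, hc1⟩ := hd1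
  obtain ⟨A2, harc2, hc2⟩ := hd2
  rw [← hm1] at hc1
  rw [← hm2] at hc2
  have hc1' : A1.ncard = m1 + 1 := by
    have h' : ((A1.ncard : ℕ) : ℕ∞) = ((m1 + 1 : ℕ) : ℕ∞) := by push_cast; exact hc1
    exact Nat.cast_inj.mp h'
  have hc2' : A2.ncard = m2 + 1 := by
    have h' : ((A2.ncard : ℕ) : ℕ∞) = ((m2 + 1 : ℕ) : ℕ∞) := by push_cast; exact hc2
    exact Nat.cast_inj.mp h'
  obtain ⟨l1, hch1, hh1, hl1, hlen1⟩ := exists_walk_of_arc harc1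
  obtain ⟨l2, hch2, hh2, hl2, hlen2⟩ := exists_walk_of_arc harc2
  have hl1ne : l1 ≠ [] := by intro h; rw [h] at hh1; simp at hh1
  have hl2ne : l2 ≠ [] := by intro h; rw [h] at hh2; simp at hh2
  -- concatenated walk from x to z
  have hconc : ∃ l : List X, l.Chain' (Adjacent t) ∧ l.head? = some x ∧
      l.getLast? = some z ∧ l.length ≤ l1.length + l2.length - 1 := by
    cases l2 with
    | nil => exact absurd rfl hl2ne
    | cons y' rest =>
      have hy' : y = y' := by
        have := hh2
        simp only [List.head?_cons, Option.some.injEq] at this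
        exact this.symm
      subst hy'
      cases rest with
      | nil =>
        have hyz : y = z := by simpa using hl2
        subst hyz
        refine ⟨l1, hch1, hh1, hl1, by simp⟩
      | cons q rest' =>
        refine ⟨l1 ++ (q :: rest'), ?_, ?_, ?_, ?_⟩
        · refine List.isChain_append.2 ⟨hch1, (List.isChain_cons_cons.1 hch2).2, ?_⟩
          intro p hp q' hq'
          rw [hl1] at hp
          simp only [Option.mem_def, Option.some.injEq] at hp
          simp only [List.head?_cons, Option.mem_def, Option.some.injEq] at hq'
          subst hp; subst hq'
          exact (List.isChain_cons_cons.1 hch2).1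
        · rw [head?_append_left hl1ne]; exact hh1
        · rw [getLast?_append_right (by simp)]
          simpa using hl2
        · simp only [List.length_append, List.length_cons]
          omega
  obtain ⟨l, hchl, hhl, hll, hlenl⟩ := hconc
  obtain ⟨l', hp1, hp2, hp3, hp4, hp5, hp6⟩ := walk_minimize l.length l (le_refl _) hchl
  rw [hhl] at hp2
  rw [hll] at hp3
  have hl'ne : l' ≠ [] := by intro h; rw [h] at hp2; simp at hp2
  have hfin := cotsDist_le_fence l' hl'ne hp1 hp5 hp6 hp2 hp3
  refine le_trans hfin ?_
  rw [← hm1, ← hm2]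
  have hnat : l'.length - 1 ≤ m1 + m2 := by
    have e1 : l1.length ≤ m1 + 1 := by omega
    have e2 : l2.length ≤ m2 + 1 := by omega
    omega
  calc ((l'.length - 1 : ℕ) : ℕ∞) ≤ ((m1 + m2 : ℕ) : ℕ∞) := by exact_mod_cast hnat
  _ = (m1 : ℕ∞) + (m2 : ℕ∞) := by push_cast; ring

end Dev

/-- The COTS-distance on a path-connected finite space is a metric. -/
theorem stmt6 {X : Type*} [t : TopologicalSpace X] [Finite X] [PathConnectedSpace X] :
    (∀ x : X, cotsDist t x x = 0) ∧
    (∀ x y : X, cotsDist t x y = cotsDist t y x) ∧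
    (∀ x y z : X, cotsDist t x z ≤ cotsDist t x y + cotsDist t y z) :=
  ⟨fun x => cotsDist_self x, fun x y => cotsDist_comm x y, fun x y z => cotsDist_triangle x y z⟩
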